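/- Let w = (y+ε)·∫_y^1 h(x,τ)/(τ+ε) dτ with ‖h‖_{L²(D₁⁺)} ≤ M, where D₁⁺ = [−π,π] × [0,1]. Then the trace at y = 0 satisfies ‖w(·, 0)‖_{L²([−π,π])} ≤ M √ε, and hence ‖w(·,0)‖_{L²([−π,π])} → 0 as ε → 0. -/

import Mathlib

open MeasureTheory Real Filter

lemma stmt17_pointwise (ε : ℝ) (hε : 0 < ε) (g : ℝ × ℝ → ℝ) (x : ℝ)
    (hx : Integrable (fun τ => g (x, τ) ^ 2) (volume.restrict (Set.Icc (0:ℝ) 1))) :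
    (ε * ∫ τ in (0:ℝ)..(1:ℝ), g (x, τ) / (τ + ε)) ^ 2
      ≤ ε * ∫ τ in Set.Icc (0:ℝ) 1, g (x, τ) ^ 2 := by
  set ν := volume.restrict (Set.Icc (0:ℝ) 1) with hν
  have hIoc : volume.restrict (Set.Ioc (0:ℝ) 1) = ν :=
    Measure.restrict_congr_set Ioc_ae_eq_Icc
  have hiv : (∫ τ in (0:ℝ)..(1:ℝ), g (x, τ) / (τ + ε)) = ∫ τ, g (x, τ) / (τ + ε) ∂ν := by
    rw [intervalIntegral.integral_of_le zero_le_one]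
    rw [show (∫ τ in Set.Ioc (0:ℝ) 1, g (x, τ) / (τ + ε))
        = ∫ τ, g (x, τ) / (τ + ε) ∂(volume.restrict (Set.Ioc (0:ℝ) 1)) from rfl, hIoc]
  have hpos : ∀ᵐ τ ∂ν, τ + ε > 0 := by
    filter_upwards [ae_restrict_mem measurableSet_Icc] with τ hτ
    linarith [hτ.1]
  have hG0 : (0:ℝ) ≤ ∫ τ, g (x, τ) ^ 2 ∂ν := integral_nonneg fun τ => sq_nonneg _
  by_cases hI : Integrable (fun τ => g (x, τ) / (τ + ε)) ν
  · have hg_aesm : AEStronglyMeasurable (fun τ => g (x, τ)) ν := by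
      have heq : ∀ᵐ τ ∂ν, g (x, τ) = (g (x, τ) / (τ + ε)) * (τ + ε) := by
        filter_upwards [hpos] with τ hτ
        field_simp
      exact (hI.aestronglyMeasurable.mul
        ((continuous_id.add continuous_const).aestronglyMeasurable)).congr
        (Filter.EventuallyEq.symm heq)
    have habs_aesm : AEStronglyMeasurable (fun τ => |g (x, τ)|) ν := by
      have := hg_aesm.norm; simpa [Real.norm_eq_abs] using this
    have hmemf : MemLp (fun τ => |g (x, τ)|) (ENNReal.ofReal 2) ν := by
      rw [show ENNReal.ofReal 2 = 2 by norm_num, memLp_two_iff_integrable_sq habs_aesm]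
      exact hx.congr (Filter.Eventually.of_forall fun τ => (sq_abs _).symm)
    have hcont : ContinuousOn (fun τ : ℝ => (τ + ε)⁻¹) (Set.Icc (0:ℝ) 1) := by
      refine ContinuousOn.inv₀ (by fun_prop) fun τ hτ => ?_
      have := hτ.1; positivity
    have hmemg : MemLp (fun τ : ℝ => (τ + ε)⁻¹) (ENNReal.ofReal 2) ν := by
      rw [show ENNReal.ofReal 2 = 2 by norm_num, memLp_two_iff_integrable_sq
        (hcont.aestronglyMeasurable measurableSet_Icc)]
      exact (hcont.pow 2).integrableOn_compact isCompact_Icc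
    have hpq : Real.HolderConjugate 2 2 := Real.holderConjugate_iff.mpr ⟨one_lt_two, by norm_num⟩
    have holder := integral_mul_le_Lp_mul_Lq_of_nonneg hpq
      (f := fun τ => |g (x, τ)|) (g := fun τ : ℝ => (τ + ε)⁻¹)
      (Filter.Eventually.of_forall fun τ => abs_nonneg _)
      (by filter_upwards [hpos] with τ hτ; positivity) hmemf hmemg
    beta_reduce at holder
    have h2n : ∀ y : ℝ, y ^ (2:ℝ) = y ^ (2:ℕ) := fun y => by
      rw [show (2:ℝ) = ((2:ℕ):ℝ) by norm_num, Real.rpow_natCast]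
    simp only [h2n] at holder
    have hw : (∫ τ, ((τ + ε)⁻¹) ^ 2 ∂ν) ≤ ε⁻¹ := by
      have e1 : (∫ τ, ((τ + ε)⁻¹) ^ 2 ∂ν) = ∫ τ in (0:ℝ)..(1:ℝ), ((τ + ε)⁻¹) ^ 2 := by
        rw [intervalIntegral.integral_of_le zero_le_one]
        rw [show (∫ τ in Set.Ioc (0:ℝ) 1, ((τ + ε)⁻¹) ^ 2)
            = ∫ τ, ((τ + ε)⁻¹) ^ 2 ∂(volume.restrict (Set.Ioc (0:ℝ) 1)) from rfl, hIoc]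
      have e2 : (∫ τ in (0:ℝ)..(1:ℝ), ((τ + ε)⁻¹) ^ 2) = ∫ u in ε..(1 + ε), (u⁻¹) ^ 2 := by
        have := intervalIntegral.integral_comp_add_right (a := (0:ℝ)) (b := 1)
          (fun u : ℝ => (u⁻¹) ^ 2) ε
        simpa [add_comm] using this
      have e3 : (∫ u in ε..(1 + ε), (u⁻¹) ^ 2) = ∫ u in ε..(1 + ε), u ^ (-2 : ℤ) := by
        refine intervalIntegral.integral_congr fun u _ => ?_
        rw [zpow_neg, inv_pow]
        norm_cast
      have h0 : (0:ℝ) ∉ Set.uIcc ε (1 + ε) := by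
        rw [Set.mem_uIcc]; push_neg
        constructor <;> intro h <;> linarith
      rw [e1, e2, e3, integral_zpow (Or.inr ⟨by norm_num, h0⟩)]
      have hinv : (0:ℝ) ≤ (1 + ε)⁻¹ := by positivity
      have hA : ((1 + ε) : ℝ) ^ ((-2 : ℤ) + 1) = (1 + ε)⁻¹ := by norm_num
      have hB : (ε : ℝ) ^ ((-2 : ℤ) + 1) = ε⁻¹ := by norm_num
      rw [hA, hB]
      push_cast
      rw [show ((1 + ε)⁻¹ - ε⁻¹) / ((-2 : ℝ) + 1) = ε⁻¹ - (1 + ε)⁻¹ by ring]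
      linarith
    have hsq : (∫ τ, |g (x, τ)| ^ 2 ∂ν) = ∫ τ, g (x, τ) ^ 2 ∂ν :=
      integral_congr_ae (Filter.Eventually.of_forall fun τ => sq_abs _)
    set G := ∫ τ, g (x, τ) ^ 2 ∂ν with hGdef
    have h1 : |∫ τ, g (x, τ) / (τ + ε) ∂ν| ≤ ∫ τ, |g (x, τ)| * (τ + ε)⁻¹ ∂ν := by
      calc |∫ τ, g (x, τ) / (τ + ε) ∂ν| ≤ ∫ τ, |g (x, τ)| / |τ + ε| ∂ν := by
            simpa [Real.norm_eq_abs, abs_div] using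
              norm_integral_le_integral_norm (μ := ν) (fun τ => g (x, τ) / (τ + ε))
        _ = ∫ τ, |g (x, τ)| * (τ + ε)⁻¹ ∂ν := by
            refine integral_congr_ae ?_
            filter_upwards [hpos] with τ hτ
            rw [abs_of_pos hτ, div_eq_mul_inv]
    have h2 : (∫ τ, |g (x, τ)| * (τ + ε)⁻¹ ∂ν) ≤ Real.sqrt G * Real.sqrt ε⁻¹ := by
      refine holder.trans ?_
      have e4 : ((∫ τ, |g (x, τ)| ^ 2 ∂ν) : ℝ) ^ ((1:ℝ) / 2) = Real.sqrt G := by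
        rw [hsq, Real.sqrt_eq_rpow]
      have h5 : ((∫ τ, ((τ + ε)⁻¹) ^ 2 ∂ν) : ℝ) ^ ((1:ℝ) / 2) ≤ Real.sqrt ε⁻¹ := by
        rw [Real.sqrt_eq_rpow]
        exact Real.rpow_le_rpow (integral_nonneg fun τ => sq_nonneg _) hw (by norm_num)
      exact mul_le_mul (le_of_eq e4) h5
        (Real.rpow_nonneg (integral_nonneg fun τ => sq_nonneg _) _) (Real.sqrt_nonneg _)
    have habs : |∫ τ, g (x, τ) / (τ + ε) ∂ν| ≤ Real.sqrt G * Real.sqrt ε⁻¹ := h1.trans h2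
    have h3 : (∫ τ, g (x, τ) / (τ + ε) ∂ν) ^ 2 ≤ G * ε⁻¹ := by
      calc (∫ τ, g (x, τ) / (τ + ε) ∂ν) ^ 2 = |∫ τ, g (x, τ) / (τ + ε) ∂ν| ^ 2 :=
            (sq_abs _).symm
        _ ≤ (Real.sqrt G * Real.sqrt ε⁻¹) ^ 2 := by
            exact pow_le_pow_left₀ (abs_nonneg _) habs 2
        _ = G * ε⁻¹ := by
            rw [mul_pow, Real.sq_sqrt hG0, Real.sq_sqrt (by positivity)]
    rw [hiv, mul_pow]
    calc ε ^ 2 * (∫ τ, g (x, τ) / (τ + ε) ∂ν) ^ 2 ≤ ε ^ 2 * (G * ε⁻¹) :=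
          mul_le_mul_of_nonneg_left h3 (sq_nonneg ε)
      _ = ε * G := by field_simp
  · rw [hiv, integral_undef hI]
    simpa using mul_nonneg hε.le hG0

lemma stmt17_key (ε : ℝ) (hε : 0 < ε) (g : ℝ × ℝ → ℝ)
    (hint : Integrable (fun p => g p ^ 2)
      (volume.restrict ((Set.Icc (-π) π) ×ˢ (Set.Icc (0:ℝ) 1)))) :
    (∫ x in Set.Icc (-π) π, (ε * ∫ τ in (0:ℝ)..(1:ℝ), g (x, τ) / (τ + ε)) ^ 2)
      ≤ ε * ∫ p in (Set.Icc (-π) π) ×ˢ (Set.Icc (0:ℝ) 1), g p ^ 2 := by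
  set μ := volume.restrict (Set.Icc (-π) π) with hμ
  set ν := volume.restrict (Set.Icc (0:ℝ) 1) with hν
  have hprod : volume.restrict ((Set.Icc (-π) π) ×ˢ (Set.Icc (0:ℝ) 1)) = μ.prod ν := by
    rw [hμ, hν, Measure.prod_restrict, ← Measure.volume_eq_prod]
  have hint' : Integrable (fun p => g p ^ 2) (μ.prod ν) := by rwa [hprod] at hint
  have hslice : ∀ᵐ x ∂μ, Integrable (fun τ => g (x, τ) ^ 2) ν := hint'.prod_right_ae
  have hGint : Integrable (fun x => ∫ τ, g (x, τ) ^ 2 ∂ν) μ := hint'.integral_prod_left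
  have hmono : (∫ x, (ε * ∫ τ in (0:ℝ)..(1:ℝ), g (x, τ) / (τ + ε)) ^ 2 ∂μ)
      ≤ ∫ x, ε * ∫ τ, g (x, τ) ^ 2 ∂ν ∂μ := by
    refine integral_mono_of_nonneg (Filter.Eventually.of_forall fun x => sq_nonneg _)
      (hGint.const_mul ε) ?_
    filter_upwards [hslice] with x hx
    exact stmt17_pointwise ε hε g x hx
  calc (∫ x, (ε * ∫ τ in (0:ℝ)..(1:ℝ), g (x, τ) / (τ + ε)) ^ 2 ∂μ)
      ≤ ∫ x, ε * ∫ τ, g (x, τ) ^ 2 ∂ν ∂μ := hmono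
    _ = ε * ∫ x, ∫ τ, g (x, τ) ^ 2 ∂ν ∂μ := integral_const_mul ε _
    _ = ε * ∫ p, g p ^ 2 ∂(μ.prod ν) := by rw [integral_prod _ hint']
    _ = ε * ∫ p in (Set.Icc (-π) π) ×ˢ (Set.Icc (0:ℝ) 1), g p ^ 2 := by rw [hprod]

theorem stmt17 (M : ℝ) (hM : 0 ≤ M) (h : ℝ → ℝ × ℝ → ℝ)
    (hmeas : ∀ ε > (0:ℝ), Integrable (fun p => (h ε p) ^ 2)
      (volume.restrict ((Set.Icc (-π) π) ×ˢ (Set.Icc (0:ℝ) 1))))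
    (hbound : ∀ ε > (0:ℝ),
      (∫ p in (Set.Icc (-π) π) ×ˢ (Set.Icc (0:ℝ) 1), (h ε p) ^ 2) ≤ M ^ 2) :
    (∀ ε > (0:ℝ),
      Real.sqrt (∫ x in Set.Icc (-π) π,
          (ε * ∫ τ in (0:ℝ)..(1:ℝ), h ε (x, τ) / (τ + ε)) ^ 2)
        ≤ M * Real.sqrt ε) ∧
    Tendsto (fun ε : ℝ =>
        Real.sqrt (∫ x in Set.Icc (-π) π,
          (ε * ∫ τ in (0:ℝ)..(1:ℝ), h ε (x, τ) / (τ + ε)) ^ 2))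
      (nhdsWithin 0 (Set.Ioi 0)) (nhds 0) := by
  have key : ∀ ε > (0:ℝ),
      Real.sqrt (∫ x in Set.Icc (-π) π,
          (ε * ∫ τ in (0:ℝ)..(1:ℝ), h ε (x, τ) / (τ + ε)) ^ 2)
        ≤ M * Real.sqrt ε := by
    intro ε hε
    have h1 := stmt17_key ε hε (h ε) (hmeas ε hε)
    have h2 : (∫ x in Set.Icc (-π) π,
        (ε * ∫ τ in (0:ℝ)..(1:ℝ), h ε (x, τ) / (τ + ε)) ^ 2) ≤ ε * M ^ 2 :=
      h1.trans (mul_le_mul_of_nonneg_left (hbound ε hε) hε.le)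
    calc Real.sqrt (∫ x in Set.Icc (-π) π,
          (ε * ∫ τ in (0:ℝ)..(1:ℝ), h ε (x, τ) / (τ + ε)) ^ 2)
        ≤ Real.sqrt (ε * M ^ 2) := Real.sqrt_le_sqrt h2
      _ = M * Real.sqrt ε := by
          rw [Real.sqrt_mul hε.le, Real.sqrt_sq hM, mul_comm]
  refine ⟨key, ?_⟩
  have hub : Tendsto (fun ε : ℝ => M * Real.sqrt ε) (nhdsWithin 0 (Set.Ioi 0)) (nhds 0) := by
    have : Tendsto (fun ε : ℝ => M * Real.sqrt ε) (nhds 0) (nhds (M * Real.sqrt 0)) :=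
      (Real.continuous_sqrt.tendsto 0).const_mul M
    simpa using this.mono_left nhdsWithin_le_nhds
  refine tendsto_of_tendsto_of_tendsto_of_le_of_le' tendsto_const_nhds hub
    (Filter.Eventually.of_forall fun ε => Real.sqrt_nonneg _) ?_
  filter_upwards [self_mem_nhdsWithin] with ε hε
  exact key ε hε
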